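/- If φ ∈ S^b V and v ∈ V with ‖v‖ = 1, writing φ in an orthonormal monomial basis extending v, one has ‖vφ‖² ≤ (b+1)·‖φ‖²; more generally, for arbitrary v ∈ V, ‖vφ‖² ≤ (b+1)·‖v‖²·‖φ‖². -/

import Mathlib

open scoped BigOperators ComplexConjugate

/-- The permanent inner ℂ product on degree-`d` symmetric tensors. -/
noncomputable def permInner {V : Type*} [NormedAddCommGroup V] [InnerProductSpace ℂ V]
    {d : ℕ} (x y : Fin d → V) : ℂ :=
  ∑ π : Equiv.Perm (Fin d), ∏ k, (inner ℂ (x k) (y (π k)) : ℂ)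

/-- The symmetrization map into a concrete finite-dimensional model. -/
noncomputable def Tmap {V : Type*} [NormedAddCommGroup V] [InnerProductSpace ℂ V]
    {m d : ℕ} (e : Fin m → V) (x : Fin d → V) : EuclideanSpace ℂ (Fin d → Fin m) :=
  WithLp.toLp 2 fun f => ∑ π : Equiv.Perm (Fin d), ∏ k, (inner ℂ (e (f k)) (x (π k)) : ℂ)

lemma res {V : Type*} [NormedAddCommGroup V] [InnerProductSpace ℂ V]
    {m : ℕ} {e : Fin m → V} (he : Orthonormal ℂ e) (x : V) {y : V}
    (hy : y ∈ Submodule.span ℂ (Set.range e)) :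
    ∑ i, (inner ℂ x (e i) : ℂ) * inner ℂ (e i) y = inner ℂ x y := by
  induction hy using Submodule.span_induction with
  | mem z hz =>
    obtain ⟨j, rfl⟩ := hz
    rw [orthonormal_iff_ite] at he
    simp [he, mul_ite, Finset.sum_ite_eq]
  | zero => simp
  | add u w _ _ hu hw =>
    simp only [inner_add_right, mul_add, Finset.sum_add_distrib, hu, hw]
  | smul a u _ hu =>
    simp only [inner_smul_right, mul_left_comm, ← Finset.mul_sum, hu]

lemma keyA {V : Type*} [NormedAddCommGroup V] [InnerProductSpace ℂ V]
    {m d : ℕ} {e : Fin m → V} (he : Orthonormal ℂ e) (x y : Fin d → V)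
    (hy : ∀ k, y k ∈ Submodule.span ℂ (Set.range e)) :
    (inner ℂ (Tmap e x) (Tmap e y) : ℂ) = (d.factorial : ℂ) * permInner x y := by
  have step1 : (inner ℂ (Tmap e x) (Tmap e y) : ℂ)
      = ∑ π : Equiv.Perm (Fin d), ∑ σ : Equiv.Perm (Fin d),
          ∏ k, ∑ i, (inner ℂ (x (π k)) (e i) : ℂ) * inner ℂ (e i) (y (σ k)) := by
    simp only [PiLp.inner_apply, RCLike.inner_apply', Tmap, WithLp.ofLp_toLp, map_sum, map_prod,
      Finset.sum_mul_sum, ← Finset.prod_mul_distrib]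
    rw [Finset.sum_comm]
    refine Finset.sum_congr rfl fun π _ => ?_
    rw [Finset.sum_comm]
    refine Finset.sum_congr rfl fun σ _ => ?_
    rw [Finset.prod_univ_sum (t := fun _ => (Finset.univ : Finset (Fin m)))
      (f := fun k i => (inner ℂ (x (π k)) (e i) : ℂ) * inner ℂ (e i) (y (σ k)))]
    rw [Fintype.piFinset_univ]
    refine Finset.sum_congr rfl fun f _ => ?_
    refine Finset.prod_congr rfl fun k _ => ?_
    rw [inner_conj_symm]
  rw [step1]
  have step2 : ∀ π σ : Equiv.Perm (Fin d),
      (∏ k, ∑ i, (inner ℂ (x (π k)) (e i) : ℂ) * inner ℂ (e i) (y (σ k)))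
        = ∏ k, (inner ℂ (x (π k)) (y (σ k)) : ℂ) := by
    intro π σ
    exact Finset.prod_congr rfl fun k _ => res he _ (hy _)
  simp only [step2]
  have step3 : ∀ π : Equiv.Perm (Fin d),
      (∑ σ : Equiv.Perm (Fin d), ∏ k, (inner ℂ (x (π k)) (y (σ k)) : ℂ))
        = permInner x y := by
    intro π
    have h1 : ∀ σ : Equiv.Perm (Fin d),
        (∏ k, (inner ℂ (x (π k)) (y (σ k)) : ℂ))
          = ∏ k, (inner ℂ (x k) (y ((σ * π⁻¹) k)) : ℂ) := by
      intro σ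
      rw [← Equiv.prod_comp π (fun k => (inner ℂ (x k) (y ((σ * π⁻¹) k)) : ℂ))]
      refine Finset.prod_congr rfl fun k _ => ?_
      simp [Equiv.Perm.mul_apply]
    simp only [h1]
    rw [show permInner x y = ∑ σ : Equiv.Perm (Fin d),
        ∏ k, (inner ℂ (x k) (y (σ k)) : ℂ) from rfl]
    exact Equiv.sum_comp (Equiv.mulRight π⁻¹)
      (fun σ => ∏ k, (inner ℂ (x k) (y (σ k)) : ℂ))
  simp only [step3, Finset.sum_const, Finset.card_univ, Fintype.card_perm,
    Fintype.card_fin, nsmul_eq_mul]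

/-- The permutation sending `p ↦ 0` and `p.succAbove j ↦ (σ j).succ`. -/
def permF {d : ℕ} (p : Fin (d + 1)) (σ : Equiv.Perm (Fin d)) : Equiv.Perm (Fin (d + 1)) :=
  (finSuccEquiv' p).trans (σ.optionCongr.trans (finSuccEquiv d).symm)

lemma permF_at {d : ℕ} (p : Fin (d + 1)) (σ : Equiv.Perm (Fin d)) : permF p σ p = 0 := by
  simp [permF, finSuccEquiv'_at]

lemma permF_succAbove {d : ℕ} (p : Fin (d + 1)) (σ : Equiv.Perm (Fin d)) (j : Fin d) :
    permF p σ (p.succAbove j) = (σ j).succ := by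
  simp [permF, finSuccEquiv'_succAbove]

lemma permF_bijective {d : ℕ} :
    Function.Bijective (fun q : Fin (d + 1) × Equiv.Perm (Fin d) => permF q.1 q.2) := by
  rw [Fintype.bijective_iff_injective_and_card]
  constructor
  · rintro ⟨p, σ⟩ ⟨p', σ'⟩ h
    simp only at h
    have hp : p = p' := by
      have h1 : permF p σ p = 0 := permF_at p σ
      have h2 : permF p σ p' = 0 := by rw [h]; exact permF_at p' σ'
      exact (permF p σ).injective (h1.trans h2.symm)
    subst hp
    have hσ : σ = σ' := by
      refine Equiv.ext fun j => ?_
      have := congrArg (fun π : Equiv.Perm (Fin (d+1)) => π (p.succAbove j)) h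
      simp only [permF_succAbove] at this
      exact Fin.succ_injective _ this
    rw [hσ]
  · simp only [Fintype.card_prod, Fintype.card_perm, Fintype.card_fin, Nat.factorial_succ]

lemma keyB {V : Type*} [NormedAddCommGroup V] [InnerProductSpace ℂ V]
    {m d : ℕ} (e : Fin m → V) (v : V) (x : Fin d → V) (f : Fin (d + 1) → Fin m) :
    Tmap e (Fin.cons v x) f
      = ∑ p : Fin (d + 1), (inner ℂ (e (f p)) v : ℂ) * Tmap e x (f ∘ p.succAbove) := by
  set G : Equiv.Perm (Fin (d + 1)) → ℂ :=
    fun π => ∏ k, (inner ℂ (e (f k)) ((Fin.cons v x : Fin (d + 1) → V) (π k)) : ℂ) with hG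
  have hb : ∑ q : Fin (d + 1) × Equiv.Perm (Fin d), G (permF q.1 q.2) = ∑ π, G π :=
    Equiv.sum_comp (Equiv.ofBijective _ permF_bijective) G
  rw [Tmap, WithLp.ofLp_toLp]
  rw [show (∑ π : Equiv.Perm (Fin (d+1)), ∏ k, (inner ℂ (e (f k)) ((Fin.cons v x : Fin (d + 1) → V) (π k)) : ℂ))
      = ∑ π, G π from rfl]
  rw [← hb, Fintype.sum_prod_type]
  refine Finset.sum_congr rfl fun p _ => ?_
  rw [Tmap, WithLp.ofLp_toLp, Finset.mul_sum]
  refine Finset.sum_congr rfl fun σ _ => ?_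
  simp only [hG]
  rw [Fin.prod_univ_succAbove
    (fun k => (inner ℂ (e (f k)) ((Fin.cons v x : Fin (d + 1) → V) (permF (p, σ).1 (p, σ).2 k)) : ℂ)) p]
  congr 1
  · rw [permF_at, Fin.cons_zero]
  · refine Finset.prod_congr rfl fun j _ => ?_
    rw [permF_succAbove, Fin.cons_succ]
    rfl

lemma parseval {V : Type*} [NormedAddCommGroup V] [InnerProductSpace ℂ V]
    {m : ℕ} {e : Fin m → V} (he : Orthonormal ℂ e) {v : V}
    (hv : v ∈ Submodule.span ℂ (Set.range e)) :
    ∑ i, ‖(inner ℂ (e i) v : ℂ)‖ ^ 2 = ‖v‖ ^ 2 := by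
  have h := res he v hv
  have h2 : ∀ i, (inner ℂ v (e i) : ℂ) * inner ℂ (e i) v
      = ((‖(inner ℂ (e i) v : ℂ)‖ ^ 2 : ℝ) : ℂ) := by
    intro i
    rw [← inner_conj_symm v (e i)]
    push_cast
    exact RCLike.conj_mul _
  rw [inner_self_eq_norm_sq_to_K] at h
  simp only [h2] at h
  exact Complex.ofReal_injective (by push_cast at h ⊢; exact h)

lemma keyC {V : Type*} [NormedAddCommGroup V] [InnerProductSpace ℂ V]
    {m : ℕ} {e : Fin m → V} (he : Orthonormal ℂ e) {v : V}
    (hv : v ∈ Submodule.span ℂ (Set.range e)) {d : ℕ} (p : Fin (d + 1))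
    (Φ : EuclideanSpace ℂ (Fin d → Fin m))
    (G : EuclideanSpace ℂ (Fin (d + 1) → Fin m))
    (hGdef : G = WithLp.toLp 2 fun f => (inner ℂ (e (f p)) v : ℂ) * Φ (f ∘ p.succAbove)) :
    ‖G‖ ≤ ‖v‖ * ‖Φ‖ := by
  have hG : ‖G‖ ^ 2 = ∑ f : Fin (d + 1) → Fin m, ‖G f‖ ^ 2 := by
    rw [EuclideanSpace.norm_eq, Real.sq_sqrt]
    positivity
  have hΦ : ‖Φ‖ ^ 2 = ∑ g : Fin d → Fin m, ‖Φ g‖ ^ 2 := by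
    rw [EuclideanSpace.norm_eq, Real.sq_sqrt]
    positivity
  have key : ‖G‖ ^ 2 = (‖v‖ * ‖Φ‖) ^ 2 := by
    rw [hG]
    rw [← Equiv.sum_comp (Fin.insertNthEquiv (fun _ => Fin m) p)
      (fun f => ‖G f‖ ^ 2)]
    rw [Fintype.sum_prod_type]
    have : ∀ (a : Fin m) (g : Fin d → Fin m),
        ‖G (Fin.insertNthEquiv (fun _ => Fin m) p (a, g))‖ ^ 2
          = ‖(inner ℂ (e a) v : ℂ)‖ ^ 2 * ‖Φ g‖ ^ 2 := by
      intro a g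
      have h1 : (Fin.insertNth p a g : Fin (d + 1) → Fin m) p = a :=
        Fin.insertNth_apply_same (α := fun _ => Fin m) p a g
      have h2 : (fun j => (Fin.insertNth (α := fun _ => Fin m) p a g) (p.succAbove j)) = g := by
        funext j
        exact Fin.insertNth_apply_succAbove (α := fun _ => Fin m) p a g j
      simp only [hGdef, Fin.insertNthEquiv_apply, norm_mul, mul_pow, Function.comp_def, h1]
      exact congrArg (fun t => ‖(inner ℂ (e a) v : ℂ)‖ ^ 2 * ‖Φ t‖ ^ 2) h2
    simp only [this, ← Finset.mul_sum, ← Finset.sum_mul]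
    rw [parseval he hv, ← hΦ, mul_pow]
  have h0 : (0 : ℝ) ≤ ‖v‖ * ‖Φ‖ := by positivity
  exact (pow_le_pow_iff_left₀ (norm_nonneg G) h0 two_ne_zero).mp (le_of_eq key)

/-- If `φ ∈ S^b V` (an element of the span of degree-`b` monomials in the symmetric algebra,
modelled by a commutative ℂ-algebra `A` with inclusion `ι : V →ₗ[ℂ] A` carrying the
sesquilinear permanent inner ℂ product `B`), then for a unit vector `v`,
`‖vφ‖² ≤ (b+1)·‖φ‖²`, and more generally for arbitrary `v`,
`‖vφ‖² ≤ (b+1)·‖v‖²·‖φ‖²`. -/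
theorem stmt9 {V : Type*} [NormedAddCommGroup V] [InnerProductSpace ℂ V]
    {A : Type*} [CommRing A] [Algebra ℂ A] (ι : V →ₗ[ℂ] A)
    (B : A →ₗ⋆[ℂ] A →ₗ[ℂ] ℂ)
    (hBperm : ∀ {d : ℕ} (x y : Fin d → V),
      B (∏ i, ι (x i)) (∏ i, ι (y i)) = permInner x y)
    (v : V) (b : ℕ) (φ : A)
    (hφ : φ ∈ Submodule.span ℂ {x : A | ∃ u : Fin b → V, x = ∏ i, ι (u i)}) :
    (‖v‖ = 1 → (B (ι v * φ) (ι v * φ)).re ≤ (b + 1 : ℝ) * (B φ φ).re) ∧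
      (B (ι v * φ) (ι v * φ)).re ≤ (b + 1 : ℝ) * ‖v‖ ^ 2 * (B φ φ).re := by
  -- extract a finite representation
  obtain ⟨n, c, g, hrep⟩ := Submodule.mem_span_set'.mp hφ
  have hgx : ∀ i, ∃ u : Fin b → V, (g i : A) = ∏ k, ι (u k) := fun i => (g i).2
  choose x hx using hgx
  have hφ' : φ = ∑ i, c i • (∏ k, ι (x i k)) := by
    rw [← hrep]
    exact (Finset.sum_congr rfl fun i _ => by rw [hx i]).symm
  -- the finite-dimensional subspace and orthonormal family
  set Sset : Set V := Set.range (fun q : Fin n × Fin b => x q.1 q.2) ∪ {v} with hSset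
  have hfin : Sset.Finite := (Set.finite_range _).union (Set.finite_singleton v)
  haveI : FiniteDimensional ℂ (Submodule.span ℂ Sset) :=
    FiniteDimensional.span_of_finite ℂ hfin
  set W := Submodule.span ℂ Sset with hW
  set ob := stdOrthonormalBasis ℂ W with hob
  set e : Fin (Module.finrank ℂ W) → V := fun i => ((ob i : W) : V) with he_def
  have he : Orthonormal ℂ e := by
    have h0 := ob.orthonormal
    rw [orthonormal_iff_ite] at h0 ⊢
    intro i j
    rw [← h0 i j]
    exact (Submodule.coe_inner W (ob i) (ob j)).symm
  have hspan : W ≤ Submodule.span ℂ (Set.range e) := by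
    have h1 : Set.range e = W.subtype '' Set.range ⇑ob := by
      rw [← Set.range_comp]; rfl
    have h2 : Submodule.span ℂ (Set.range ⇑ob) = ⊤ := by
      rw [← ob.coe_toBasis]; exact ob.toBasis.span_eq
    rw [h1, Submodule.span_image, h2, Submodule.map_top, Submodule.range_subtype]
  have hv' : v ∈ Submodule.span ℂ (Set.range e) :=
    hspan (Submodule.subset_span (Or.inr rfl))
  have hx' : ∀ i k, x i k ∈ Submodule.span ℂ (Set.range e) := fun i k =>
    hspan (Submodule.subset_span (Or.inl ⟨(i, k), rfl⟩))
  have hcons : ∀ i k, (Fin.cons v (x i) : Fin (b + 1) → V) k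
      ∈ Submodule.span ℂ (Set.range e) := by
    intro i k
    induction k using Fin.cases with
    | zero => simpa using hv'
    | succ j => simpa using hx' i j
  -- the concrete model vectors
  set Φ : EuclideanSpace ℂ (Fin b → Fin (Module.finrank ℂ W)) :=
    ∑ i, c i • Tmap e (x i) with hΦdef
  set Ψ : EuclideanSpace ℂ (Fin (b + 1) → Fin (Module.finrank ℂ W)) :=
    ∑ i, c i • Tmap e (Fin.cons v (x i)) with hΨdef
  set Gfun : Fin (b + 1) → EuclideanSpace ℂ (Fin (b + 1) → Fin (Module.finrank ℂ W)) :=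
    fun p => WithLp.toLp 2 fun f => (inner ℂ (e (f p)) v : ℂ) * Φ (f ∘ p.succAbove) with hGfun
  -- B φ φ in terms of Φ
  have hTT : ∀ i j, (inner ℂ (Tmap e (x i)) (Tmap e (x j)) : ℂ)
      = (b.factorial : ℂ) * permInner (x i) (x j) :=
    fun i j => keyA he _ _ (fun k => hx' j k)
  have hBφ : (inner ℂ Φ Φ : ℂ) = (b.factorial : ℂ) * B φ φ := by
    rw [hφ', hΦdef]
    simp only [sum_inner, inner_sum, inner_smul_left, inner_smul_right, hTT,
      map_sum, LinearMap.sum_apply, map_smulₛₗ, LinearMap.smul_apply, map_smul,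
      smul_eq_mul, hBperm, RingHom.id_apply, Finset.mul_sum]
    refine Finset.sum_congr rfl fun i _ => Finset.sum_congr rfl fun j _ => by ring
  -- ι v * φ as a combination of (b+1)-monomials
  have hmon : ∀ i, (∏ k : Fin (b + 1), ι ((Fin.cons v (x i) : Fin (b + 1) → V) k))
      = ι v * ∏ k, ι (x i k) := by
    intro i
    have h1 : (fun k : Fin (b + 1) => ι ((Fin.cons v (x i) : Fin (b + 1) → V) k))
        = Fin.cons (ι v) (fun j => ι (x i j)) := Fin.comp_cons ⇑ι v (x i)
    rw [h1]
    exact Fin.prod_cons (ι v) fun j => ι (x i j)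
  have hvφ : ι v * φ = ∑ i, c i • ∏ k : Fin (b + 1), ι ((Fin.cons v (x i) : Fin (b + 1) → V) k) := by
    rw [hφ', Finset.mul_sum]
    refine Finset.sum_congr rfl fun i _ => ?_
    rw [hmon, mul_smul_comm]
  have hTT' : ∀ i j, (inner ℂ (Tmap e (Fin.cons v (x i))) (Tmap e (Fin.cons v (x j))) : ℂ)
      = ((b + 1).factorial : ℂ) * permInner (Fin.cons v (x i)) (Fin.cons v (x j)) :=
    fun i j => keyA he _ _ (fun k => hcons j k)
  have hBvφ : (inner ℂ Ψ Ψ : ℂ) = ((b + 1).factorial : ℂ) * B (ι v * φ) (ι v * φ) := by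
    rw [hvφ, hΨdef]
    simp only [sum_inner, inner_sum, inner_smul_left, inner_smul_right, hTT',
      map_sum, LinearMap.sum_apply, map_smulₛₗ, LinearMap.smul_apply, map_smul,
      smul_eq_mul, hBperm, RingHom.id_apply, Finset.mul_sum]
    refine Finset.sum_congr rfl fun i _ => Finset.sum_congr rfl fun j _ => by ring
  -- the norm bound ‖Ψ‖ ≤ (b+1) ‖v‖ ‖Φ‖
  have hΨsum : Ψ = ∑ p : Fin (b + 1), Gfun p := by
    ext f
    have hL : Ψ f = ∑ i, c i * Tmap e (Fin.cons v (x i)) f := by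
      rw [hΨdef]; simp [WithLp.ofLp_sum, Finset.sum_apply]
    have hΦapp : ∀ g, Φ g = ∑ i, c i * Tmap e (x i) g := by
      intro g; rw [hΦdef]; simp [WithLp.ofLp_sum, Finset.sum_apply]
    have hR : (∑ p : Fin (b + 1), Gfun p) f
        = ∑ p : Fin (b + 1), (inner ℂ (e (f p)) v : ℂ) * Φ (f ∘ p.succAbove) :=
      by simp [hGfun, WithLp.ofLp_sum, Finset.sum_apply]
    rw [hL, hR]
    simp only [keyB e v]
    simp only [Finset.mul_sum]
    rw [Finset.sum_comm]
    refine Finset.sum_congr rfl fun p _ => ?_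
    simp only [hΦapp, Finset.mul_sum]
    exact Finset.sum_congr rfl fun i _ => by ring
  -- norm bound
  have hnorm : ‖Ψ‖ ≤ ((b : ℝ) + 1) * (‖v‖ * ‖Φ‖) := by
    rw [hΨsum]
    refine le_trans (norm_sum_le _ _) ?_
    have hle : ∀ p : Fin (b + 1), ‖Gfun p‖ ≤ ‖v‖ * ‖Φ‖ :=
      fun p => keyC he hv' p Φ (Gfun p) rfl
    calc ∑ p : Fin (b + 1), ‖Gfun p‖
        ≤ ∑ _p : Fin (b + 1), ‖v‖ * ‖Φ‖ := Finset.sum_le_sum fun p _ => hle p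
      _ = ((b : ℝ) + 1) * (‖v‖ * ‖Φ‖) := by
          rw [Finset.sum_const, Finset.card_univ, Fintype.card_fin, nsmul_eq_mul]
          push_cast
          ring
  have hre1 : ((b + 1).factorial : ℝ) * (B (ι v * φ) (ι v * φ)).re = ‖Ψ‖ ^ 2 := by
    have h := congrArg Complex.re hBvφ
    have h1 : (inner ℂ Ψ Ψ : ℂ).re = ‖Ψ‖ ^ 2 := by
      simpa using @inner_self_eq_norm_sq ℂ _ _ _ _ Ψ
    rw [h1] at h
    rw [h]
    simp [Complex.mul_re]
  have hre2 : (b.factorial : ℝ) * (B φ φ).re = ‖Φ‖ ^ 2 := by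
    have h := congrArg Complex.re hBφ
    have h1 : (inner ℂ Φ Φ : ℂ).re = ‖Φ‖ ^ 2 := by
      simpa using @inner_self_eq_norm_sq ℂ _ _ _ _ Φ
    rw [h1] at h
    rw [h]
    simp [Complex.mul_re]
  have hsq : ‖Ψ‖ ^ 2 ≤ (((b : ℝ) + 1) * (‖v‖ * ‖Φ‖)) ^ 2 :=
    pow_le_pow_left₀ (norm_nonneg Ψ) hnorm 2
  have hmain : (B (ι v * φ) (ι v * φ)).re ≤ ((b : ℝ) + 1) * ‖v‖ ^ 2 * (B φ φ).re := by
    have hb : (0 : ℝ) < ((b : ℝ) + 1) * (b.factorial : ℝ) := by positivity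
    have h2 : (((b : ℝ) + 1) * (b.factorial : ℝ)) * (B (ι v * φ) (ι v * φ)).re
        ≤ (((b : ℝ) + 1) * (b.factorial : ℝ)) * (((b : ℝ) + 1) * ‖v‖ ^ 2 * (B φ φ).re) := by
      have e1 : (((b : ℝ) + 1) * (b.factorial : ℝ)) * (B (ι v * φ) (ι v * φ)).re = ‖Ψ‖ ^ 2 := by
        rw [← hre1]
        push_cast [Nat.factorial_succ]
        ring
      have e2 : (((b : ℝ) + 1) * (b.factorial : ℝ)) * (((b : ℝ) + 1) * ‖v‖ ^ 2 * (B φ φ).re)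
          = (((b : ℝ) + 1) * (‖v‖ * ‖Φ‖)) ^ 2 := by
        rw [mul_pow, mul_pow, ← hre2]
        ring
      rw [e1, e2]
      exact hsq
    exact le_of_mul_le_mul_left h2 hb
  refine ⟨fun hv1 => ?_, hmain⟩
  have h := hmain
  rw [hv1] at h
  simpa using h
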